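/- arXiv:math-ph/0703086 — 2 statements merged into one kernel-verified Lean document; each statement's English description precedes it below -/
import Mathlib

section
/- For β > 0 and μ ∈ ℝ, the function K_{β,μ}(p) = (p²−μ)(e^{β(p²−μ)}+1)/(e^{β(p²−μ)}−1) (extended by continuity to 2/β when p² = μ) satisfies a(|p²−μ| + 2/β) ≤ K_{β,μ}(p) ≤ |p²−μ| + 2/β for all p ∈ ℝ³, where a = inf_{t>0} t(e^t+1)/((t+2)(e^t−1)) > 0. -/
open Real Set MeasureTheory

/-- The BCS symbol `K_{β,μ}(p)`, extended by continuity to `2/β` when `p² = μ`. -/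
noncomputable def Kfun (β μ : ℝ) (p : EuclideanSpace ℝ (Fin 3)) : ℝ :=
  if ‖p‖ ^ 2 = μ then 2 / β
  else (‖p‖ ^ 2 - μ) * (Real.exp (β * (‖p‖ ^ 2 - μ)) + 1) /
    (Real.exp (β * (‖p‖ ^ 2 - μ)) - 1)

/-- `a = inf_{t>0} t(e^t+1)/((t+2)(e^t-1))`. -/
noncomputable def aInf : ℝ :=
  sInf ((fun t : ℝ => t * (Real.exp t + 1) / ((t + 2) * (Real.exp t - 1))) '' Set.Ioi 0)

private lemma upper_aux {t : ℝ} (ht : 0 < t) :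
    t * (Real.exp t + 1) ≤ (t + 2) * (Real.exp t - 1) := by
  nlinarith [Real.add_one_le_exp t]

private lemma lower_aux {t : ℝ} (ht : 0 < t) :
    (t + 2) * (Real.exp t - 1) ≤ 2 * (t * (Real.exp t + 1)) := by
  rcases le_or_gt 2 t with h | h
  · nlinarith [Real.exp_pos t, Real.add_one_le_exp t]
  · set G := Real.exp (t/4) with hGdef
    have hE : 0 < G := Real.exp_pos _
    have hG : G * (4 - t) ≤ 4 := by
      have h1 := Real.add_one_le_exp (-(t/4))
      rw [Real.exp_neg, ← hGdef] at h1
      have h2 := mul_le_mul_of_nonneg_left h1 hE.le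
      rw [mul_inv_cancel₀ (ne_of_gt hE)] at h2
      nlinarith [h2]
    have hGn : 0 ≤ G * (4 - t) := by
      have : (0:ℝ) ≤ 4 - t := by linarith
      positivity
    have h4 : (G * (4 - t))^4 ≤ 4^4 := pow_le_pow_left₀ hGn hG 4
    have hEt : Real.exp t = G^4 := by
      rw [hGdef, ← Real.exp_nat_mul]; congr 1; push_cast; ring
    have hpoly : 256*(2-t) ≤ (3*t+2)*(4-t)^4 := by
      nlinarith [sq_nonneg t, sq_nonneg (t-2), sq_nonneg (t*(t-2)), mul_pos ht (sub_pos.mpr h)]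
    have h44 : (0:ℝ) < (4-t)^4 := by
      have : (0:ℝ) < 4 - t := by linarith
      positivity
    have key : ((2-t) * G^4) * (4-t)^4 ≤ (3*t+2) * (4-t)^4 := by
      nlinarith [h4, hpoly, pow_pos hE 4]
    have key2 : (2-t)*G^4 ≤ 3*t+2 := le_of_mul_le_mul_right key h44
    rw [hEt]; nlinarith [key2]

private lemma one_lt_exp_aux {t : ℝ} (ht : 0 < t) : 1 < Real.exp t := by
  have := Real.add_one_le_exp t; linarith

private lemma den_pos_aux {t : ℝ} (ht : 0 < t) : 0 < (t + 2) * (Real.exp t - 1) := by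
  have := one_lt_exp_aux ht
  nlinarith

private lemma g_lb {t : ℝ} (ht : 0 < t) :
    (1/2 : ℝ) ≤ t * (Real.exp t + 1) / ((t + 2) * (Real.exp t - 1)) := by
  rw [le_div_iff₀ (den_pos_aux ht)]
  linarith [lower_aux ht]

private lemma g_ub {t : ℝ} (ht : 0 < t) :
    t * (Real.exp t + 1) / ((t + 2) * (Real.exp t - 1)) ≤ 1 := by
  rw [div_le_one (den_pos_aux ht)]
  exact upper_aux ht

private lemma bddBelow_aux :
    BddBelow ((fun t : ℝ => t * (Real.exp t + 1) / ((t + 2) * (Real.exp t - 1))) '' Set.Ioi 0) := by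
  refine ⟨1/2, ?_⟩
  rintro x ⟨t, ht, rfl⟩
  exact g_lb ht

private lemma aInf_le_g {t : ℝ} (ht : 0 < t) :
    aInf ≤ t * (Real.exp t + 1) / ((t + 2) * (Real.exp t - 1)) :=
  csInf_le bddBelow_aux ⟨t, ht, rfl⟩

private lemma half_le_aInf : (1/2 : ℝ) ≤ aInf := by
  apply le_csInf ⟨_, Set.mem_image_of_mem _ (by norm_num : (1:ℝ) ∈ Set.Ioi 0)⟩
  rintro x ⟨t, ht, rfl⟩
  exact g_lb ht

private lemma aInf_le_one : aInf ≤ 1 :=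
  le_trans (aInf_le_g one_pos) (g_ub one_pos)

private lemma Kval_abs {β : ℝ} (s : ℝ) (hβ : 0 < β) (hs : s ≠ 0) :
    s * (Real.exp (β * s) + 1) / (Real.exp (β * s) - 1)
      = |s| * (Real.exp (β * |s|) + 1) / (Real.exp (β * |s|) - 1) := by
  rcases hs.lt_or_gt with h | h
  · rw [abs_of_neg h]
    have hne : β * s ≠ 0 := mul_ne_zero (ne_of_gt hβ) hs
    have e1 : Real.exp (β * s) ≠ 1 := by
      intro hc
      exact hne (Real.exp_injective (by rw [Real.exp_zero]; exact hc))
    have hne0 : Real.exp (β * s) ≠ 0 := ne_of_gt (Real.exp_pos _)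
    have hrel : Real.exp (β * -s) = (Real.exp (β * s))⁻¹ := by
      rw [← Real.exp_neg]; ring_nf
    rw [hrel]
    have d1 : Real.exp (β * s) - 1 ≠ 0 := sub_ne_zero.mpr e1
    have d2 : (Real.exp (β * s))⁻¹ - 1 ≠ 0 := by
      refine sub_ne_zero.mpr ?_
      rw [ne_eq, inv_eq_one]
      exact e1
    rw [div_eq_div_iff d1 d2]
    field_simp
    ring
  · rw [abs_of_pos h]

theorem Kfun_bounds (β μ : ℝ) (hβ : 0 < β) :
    0 < aInf ∧
    ∀ p : EuclideanSpace ℝ (Fin 3),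
      aInf * (|‖p‖ ^ 2 - μ| + 2 / β) ≤ Kfun β μ p ∧
      Kfun β μ p ≤ |‖p‖ ^ 2 - μ| + 2 / β := by
  have haPos : 0 < aInf := lt_of_lt_of_le (by norm_num) half_le_aInf
  refine ⟨haPos, fun p => ?_⟩
  rw [Kfun]
  split_ifs with h
  · rw [h]
    simp only [sub_self, abs_zero, zero_add]
    constructor
    · have h2 : 0 < 2 / β := by positivity
      nlinarith [aInf_le_one]
    · exact le_refl _
  · have hs : ‖p‖ ^ 2 - μ ≠ 0 := sub_ne_zero_of_ne h
    set s := ‖p‖ ^ 2 - μ with hsdef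
    rw [Kval_abs s hβ hs]
    set r := |s| with hrdef
    have hr : 0 < r := abs_pos.mpr hs
    have ht : 0 < β * r := mul_pos hβ hr
    have hE1 : 1 < Real.exp (β * r) := one_lt_exp_aux ht
    have hE1' : 0 < Real.exp (β * r) - 1 := by linarith
    constructor
    · have hg := aInf_le_g ht
      have hden := den_pos_aux ht
      have hg2 : aInf * ((β * r + 2) * (Real.exp (β * r) - 1)) ≤ β * r * (Real.exp (β * r) + 1) :=
        (le_div_iff₀ hden).mp hg
      rw [show r + 2/β = (β * r + 2)/β by field_simp]
      rw [mul_div_assoc' aInf _ β, div_le_div_iff₀ hβ hE1']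
      nlinarith [hg2]
    · rw [show r + 2/β = (β * r + 2)/β by field_simp]
      rw [div_le_div_iff₀ hE1' hβ]
      nlinarith [upper_aux ht]
end

section
/- (Strict positivity via negative Fourier transform) Let α ∈ L²(ℝ³) with Fourier transform α̂ ∈ L¹(ℝ³), and let V̂ : ℝ³ → ℝ be continuous with V̂(k) < 0 for all k. Then ∫∫ conj(α̂(p)) V̂(p−q) α̂(q) dp dq ≥ ∫∫ |α̂(p)| V̂(p−q) |α̂(q)| dp dq, with equality only if there is κ ∈ ℝ such that α̂(p) = e^{iκ}|α̂(p)| for a.e. p. -/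
open Real MeasureTheory

lemma phase_eq_aux {x y : ℂ} (hx : x ≠ 0)
    (h : ((starRingEnd ℂ) x * y).re = ‖x‖ * ‖y‖) :
    y = Complex.exp ((Complex.arg x : ℂ) * Complex.I) * (‖y‖ : ℂ) := by
  set z : ℂ := (starRingEnd ℂ) x * y with hzdef
  have habsz : ‖z‖ = ‖x‖ * ‖y‖ := by
    simp [hzdef, map_mul, Complex.norm_conj]
  have hre : z.re = ‖z‖ := by rw [habsz]; exact h
  have hsq : ‖z‖ ^ 2 = z.re ^ 2 + z.im ^ 2 := by
    rw [Complex.sq_norm, Complex.normSq_apply]; ring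
  have hre2 : z.re ^ 2 = ‖z‖ ^ 2 := by rw [hre]
  have him2 : z.im ^ 2 = 0 := by linarith
  have him : z.im = 0 := sq_eq_zero_iff.mp him2
  have hznn : z = ((‖x‖ * ‖y‖ : ℝ) : ℂ) := by
    apply Complex.ext
    · simp [hre, habsz]
    · simp [him]
  have hcx : (starRingEnd ℂ) x ≠ 0 := by simpa using hx
  have hxc : ((‖x‖ : ℝ) : ℂ) ≠ 0 := by simpa using hx
  have hexp : Complex.exp ((Complex.arg x : ℂ) * Complex.I) = x / (‖x‖ : ℂ) := by
    rw [eq_div_iff hxc, mul_comm]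
    exact Complex.norm_mul_exp_arg_mul_I x
  rw [hexp]
  apply mul_left_cancel₀ hcx
  rw [← hzdef, hznn]
  have hmc : x * (starRingEnd ℂ) x = ((‖x‖ : ℝ) : ℂ) ^ 2 := by
    rw [Complex.mul_conj, Complex.normSq_eq_norm_sq]; push_cast; ring
  field_simp
  linear_combination (norm := (push_cast; ring)) (-((‖y‖ : ℝ) : ℂ)) * hmc

/-- Strict positivity via a negative Fourier transform: for `α̂ ∈ L¹` and `V̂` continuous and
strictly negative, `∫∫ conj(α̂(p)) V̂(p−q) α̂(q) ≥ ∫∫ |α̂(p)| V̂(p−q) |α̂(q)|`, with equality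
only if `α̂(p) = e^{iκ}|α̂(p)|` for some constant `κ` and a.e. `p`. -/
theorem quadratic_form_lower_bound
    (a : EuclideanSpace ℝ (Fin 3) → ℂ) (Vh : EuclideanSpace ℝ (Fin 3) → ℝ)
    (ha : Integrable a volume) (hVcont : Continuous Vh) (hVneg : ∀ k, Vh k < 0)
    (habs : Integrable
      (fun z : EuclideanSpace ℝ (Fin 3) × EuclideanSpace ℝ (Fin 3) =>
        ‖a z.1‖ * |Vh (z.1 - z.2)| * ‖a z.2‖) volume) :
    ((∫ p : EuclideanSpace ℝ (Fin 3), ∫ q : EuclideanSpace ℝ (Fin 3),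
        (starRingEnd ℂ) (a p) * (Vh (p - q) : ℂ) * a q).re ≥
      ∫ p : EuclideanSpace ℝ (Fin 3), ∫ q : EuclideanSpace ℝ (Fin 3),
        ‖a p‖ * Vh (p - q) * ‖a q‖) ∧
    ((∫ p : EuclideanSpace ℝ (Fin 3), ∫ q : EuclideanSpace ℝ (Fin 3),
        (starRingEnd ℂ) (a p) * (Vh (p - q) : ℂ) * a q).re =
      (∫ p : EuclideanSpace ℝ (Fin 3), ∫ q : EuclideanSpace ℝ (Fin 3),
        ‖a p‖ * Vh (p - q) * ‖a q‖) →
      ∃ κ : ℝ, ∀ᵐ p ∂(volume : Measure (EuclideanSpace ℝ (Fin 3))),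
        a p = Complex.exp (κ * Complex.I) * (‖a p‖ : ℂ)) := by
  set F : EuclideanSpace ℝ (Fin 3) × EuclideanSpace ℝ (Fin 3) → ℂ :=
    fun z => (starRingEnd ℂ) (a z.1) * (Vh (z.1 - z.2) : ℂ) * a z.2 with hF
  set G : EuclideanSpace ℝ (Fin 3) × EuclideanSpace ℝ (Fin 3) → ℝ :=
    fun z => ‖a z.1‖ * Vh (z.1 - z.2) * ‖a z.2‖ with hG
  have hprod : (volume : Measure (EuclideanSpace ℝ (Fin 3) × EuclideanSpace ℝ (Fin 3)))
      = (volume : Measure (EuclideanSpace ℝ (Fin 3))).prod volume := Measure.volume_eq_prod _ _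
  have ham := ha.aestronglyMeasurable
  have hVc2 : Continuous fun z : EuclideanSpace ℝ (Fin 3) × EuclideanSpace ℝ (Fin 3) =>
      Vh (z.1 - z.2) := hVcont.comp (continuous_fst.sub continuous_snd)
  have hVm := hVc2.aestronglyMeasurable
    (μ := (volume : Measure (EuclideanSpace ℝ (Fin 3))).prod volume)
  have hconjm : AEStronglyMeasurable
      (fun z : EuclideanSpace ℝ (Fin 3) × EuclideanSpace ℝ (Fin 3) =>
        (starRingEnd ℂ) (a z.1)) ((volume : Measure (EuclideanSpace ℝ (Fin 3))).prod volume) :=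
    Complex.continuous_conj.comp_aestronglyMeasurable ham.comp_fst
  have hFm : AEStronglyMeasurable F
      ((volume : Measure (EuclideanSpace ℝ (Fin 3))).prod volume) :=
    (hconjm.mul (Complex.continuous_ofReal.comp_aestronglyMeasurable hVm)).mul
      ham.comp_snd
  have hGm : AEStronglyMeasurable G
      ((volume : Measure (EuclideanSpace ℝ (Fin 3))).prod volume) :=
    (ham.comp_fst.norm.mul hVm).mul ham.comp_snd.norm
  have habs' : Integrable
      (fun z : EuclideanSpace ℝ (Fin 3) × EuclideanSpace ℝ (Fin 3) =>
        ‖a z.1‖ * |Vh (z.1 - z.2)| * ‖a z.2‖)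
      ((volume : Measure (EuclideanSpace ℝ (Fin 3))).prod volume) := by
    rwa [hprod] at habs
  have hFint : Integrable F ((volume : Measure (EuclideanSpace ℝ (Fin 3))).prod volume) := by
    refine habs'.mono' hFm (Filter.Eventually.of_forall fun z => le_of_eq ?_)
    simp [hF, norm_mul, Complex.norm_conj, Complex.norm_real]
  have hGint : Integrable G ((volume : Measure (EuclideanSpace ℝ (Fin 3))).prod volume) := by
    refine habs'.mono' hGm (Filter.Eventually.of_forall fun z => le_of_eq ?_)
    simp [hG, Real.norm_eq_abs, abs_mul, abs_norm]
  have hL : (∫ p : EuclideanSpace ℝ (Fin 3), ∫ q : EuclideanSpace ℝ (Fin 3),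
      (starRingEnd ℂ) (a p) * (Vh (p - q) : ℂ) * a q)
      = ∫ z, F z ∂((volume : Measure (EuclideanSpace ℝ (Fin 3))).prod volume) :=
    integral_integral hFint
  have hR : (∫ p : EuclideanSpace ℝ (Fin 3), ∫ q : EuclideanSpace ℝ (Fin 3),
      ‖a p‖ * Vh (p - q) * ‖a q‖)
      = ∫ z, G z ∂((volume : Measure (EuclideanSpace ℝ (Fin 3))).prod volume) :=
    integral_integral hGint
  have hre : (∫ z, F z ∂((volume : Measure (EuclideanSpace ℝ (Fin 3))).prod volume)).re
      = ∫ z, (F z).re ∂((volume : Measure (EuclideanSpace ℝ (Fin 3))).prod volume) :=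
    (integral_re hFint).symm
  have hFreInt : Integrable (fun z => (F z).re)
      ((volume : Measure (EuclideanSpace ℝ (Fin 3))).prod volume) := hFint.re
  have hFre : ∀ z : EuclideanSpace ℝ (Fin 3) × EuclideanSpace ℝ (Fin 3),
      (F z).re = Vh (z.1 - z.2) * ((starRingEnd ℂ) (a z.1) * a z.2).re := by
    intro z
    have h1 : F z = (Vh (z.1 - z.2) : ℂ) * ((starRingEnd ℂ) (a z.1) * a z.2) := by
      rw [hF]; ring
    rw [h1, Complex.re_ofReal_mul]
  have hpt : ∀ z : EuclideanSpace ℝ (Fin 3) × EuclideanSpace ℝ (Fin 3), G z ≤ (F z).re := by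
    intro z
    have h1 : ((starRingEnd ℂ) (a z.1) * a z.2).re ≤ ‖a z.1‖ * ‖a z.2‖ := by
      calc ((starRingEnd ℂ) (a z.1) * a z.2).re
          ≤ ‖(starRingEnd ℂ) (a z.1) * a z.2‖ := Complex.re_le_norm _
        _ = ‖a z.1‖ * ‖a z.2‖ := by
            simp [map_mul, Complex.norm_conj]
    have h3 := mul_le_mul_of_nonpos_left h1 (le_of_lt (hVneg (z.1 - z.2)))
    rw [hFre z, hG]
    calc ‖a z.1‖ * Vh (z.1 - z.2) * ‖a z.2‖
        = Vh (z.1 - z.2) * (‖a z.1‖ * ‖a z.2‖) := by ring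
      _ ≤ Vh (z.1 - z.2) * ((starRingEnd ℂ) (a z.1) * a z.2).re := h3
  have hineq : (∫ z, G z ∂((volume : Measure (EuclideanSpace ℝ (Fin 3))).prod volume))
      ≤ ∫ z, (F z).re ∂((volume : Measure (EuclideanSpace ℝ (Fin 3))).prod volume) :=
    integral_mono hGint hFreInt hpt
  constructor
  · rw [hL, hR, hre]; exact hineq
  · intro heq
    rw [hL, hR, hre] at heq
    have hdint : Integrable (fun z => (F z).re - G z)
        ((volume : Measure (EuclideanSpace ℝ (Fin 3))).prod volume) := hFreInt.sub hGint
    have hdnn : 0 ≤ fun z => (F z).re - G z := fun z => sub_nonneg.mpr (hpt z)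
    have hzero : (∫ z, ((F z).re - G z)
        ∂((volume : Measure (EuclideanSpace ℝ (Fin 3))).prod volume)) = 0 := by
      rw [integral_sub hFreInt hGint, heq, sub_self]
    have hae0 : (fun z => (F z).re - G z)
        =ᵐ[(volume : Measure (EuclideanSpace ℝ (Fin 3))).prod volume] 0 :=
      (integral_eq_zero_iff_of_nonneg hdnn hdint).mp hzero
    have haeEq : ∀ᵐ z ∂((volume : Measure (EuclideanSpace ℝ (Fin 3))).prod volume),
        ((starRingEnd ℂ) (a z.1) * a z.2).re = ‖a z.1‖ * ‖a z.2‖ := by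
      filter_upwards [hae0] with z hz
      have hz' : (F z).re = G z := by
        have h0 : (F z).re - G z = 0 := hz
        linarith
      rw [hFre z, hG] at hz'
      have hVne : Vh (z.1 - z.2) ≠ 0 := ne_of_lt (hVneg _)
      apply mul_left_cancel₀ hVne
      rw [hz']; ring
    have hfub : ∀ᵐ p ∂(volume : Measure (EuclideanSpace ℝ (Fin 3))),
        ∀ᵐ q ∂(volume : Measure (EuclideanSpace ℝ (Fin 3))),
        ((starRingEnd ℂ) (a p) * a q).re = ‖a p‖ * ‖a q‖ :=
      Measure.ae_ae_of_ae_prod haeEq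
    by_cases hz : ∀ᵐ p ∂(volume : Measure (EuclideanSpace ℝ (Fin 3))), a p = 0
    · refine ⟨0, ?_⟩
      filter_upwards [hz] with p hp
      simp [hp]
    · have hfreq : ∃ᶠ p in ae (volume : Measure (EuclideanSpace ℝ (Fin 3))), ¬ a p = 0 := by
        rwa [Filter.not_eventually] at hz
      obtain ⟨p₀, hp₀ne, hp₀⟩ := (hfreq.and_eventually hfub).exists
      refine ⟨Complex.arg (a p₀), ?_⟩
      filter_upwards [hp₀] with q hq
      exact phase_eq_aux hp₀ne hq
end
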